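/- In the path decomposition P₀, P₁, …, P_k of the network with slopes f(P₀) = 1 and f(Pᵢ) defined as the maximum of (p*_a - p*_b)/L(P) over admissible attachment paths, there exists an index i₀ ≤ k such that f(P₀) > f(P₁) > … > f(P_{i₀}) > 0 = f(P_{i₀+1}) = … = f(P_k). -/

import Mathlib

open Finset

variable {V : Type*} [Fintype V] [DecidableEq V] [Inhabited V]

/-- Length of a list of vertices w.r.t. edge lengths `L` (sum over
consecutive pairs). -/
def listLen (L : V → V → ℝ) (l : List V) : ℝ :=
  ((l.zip l.tail).map (fun q => L q.1 q.2)).sum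

/-- `l` is a (simple) path in `G` with at least one edge. -/
def IsPathList (G : SimpleGraph V) (l : List V) : Prop :=
  l.Chain' G.Adj ∧ l.Nodup ∧ 2 ≤ l.length

/-- The (undirected) edge `{u,v}` occurs on the list `l`. -/
def edgeIn (l : List V) (u v : V) : Prop :=
  (u, v) ∈ l.zip l.tail ∨ (v, u) ∈ l.zip l.tail

/-- The pathSlope of a path: potential difference of the endpoints divided by the
length. -/
noncomputable def pathSlope (L : V → V → ℝ) (pstar : V → ℝ) (l : List V) : ℝ :=
  (pstar l.headI - pstar l.getLastI) / listLen L l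

/-- A vertex lies on one of the paths `P j` with `j < i`. -/
def onEarlier {k : ℕ} (P : Fin (k + 1) → List V) (i : Fin (k + 1))
    (v : V) : Prop :=
  ∃ j, j < i ∧ v ∈ P j

/-- `l` is an admissible attachment path at stage `i`: a path of `G` whose
endpoints lie on earlier paths (with nonincreasing `p*`), with no interior
vertex on earlier paths and no edge on earlier paths. -/
def Admissible {k : ℕ} (G : SimpleGraph V) (pstar : V → ℝ)
    (P : Fin (k + 1) → List V) (i : Fin (k + 1)) (l : List V) : Prop :=
  IsPathList G l ∧
  onEarlier P i l.headI ∧ onEarlier P i l.getLastI ∧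
  pstar l.getLastI ≤ pstar l.headI ∧
  (∀ v ∈ l.tail.dropLast, ¬ onEarlier P i v) ∧
  (∀ u v, edgeIn l u v → ∀ j, j < i → ¬ edgeIn (P j) u v)

set_option linter.unusedSectionVars false
set_option linter.unusedVariables false
set_option linter.deprecated false

/-- the list of consecutive pairs -/
abbrev pairs (l : List V) : List (V × V) := l.zip l.tail

lemma pairs_cons (a b : V) (t : List V) :
    pairs (a :: b :: t) = (a, b) :: pairs (b :: t) := rfl

lemma pairs_glue : ∀ (l₁ : List V) (l₂ : List V), l₁ ≠ [] → l₂ ≠ [] →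
    l₁.getLastI = l₂.headI →
    pairs (l₁ ++ l₂.tail) = pairs l₁ ++ pairs l₂
  | [], _, h, _, _ => absurd rfl h
  | [x], l₂, _, h2, hg => by
      cases l₂ with
      | nil => exact absurd rfl h2
      | cons y t =>
        simp [List.getLastI, List.headI] at hg
        subst hg
        simp [pairs]
  | x :: x' :: r, l₂, _, h2, hg => by
      have hg' : (x' :: r).getLastI = l₂.headI := by
        simpa [List.getLastI_eq_getLast?, List.getLast?] using hg
      have IH := pairs_glue (x' :: r) l₂ (by simp) h2 hg'
      have : (x :: x' :: r) ++ l₂.tail = x :: x' :: (r ++ l₂.tail) := by simp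
      rw [this]
      have h3 : pairs (x :: x' :: (r ++ l₂.tail)) = (x, x') :: pairs (x' :: (r ++ l₂.tail)) := rfl
      rw [h3]
      have h4 : x' :: (r ++ l₂.tail) = (x' :: r) ++ l₂.tail := by simp
      rw [h4, IH, pairs_cons]
      simp

lemma chain'_iff_pairs {R : V → V → Prop} : ∀ (l : List V),
    l.Chain' R ↔ ∀ p ∈ pairs l, R p.1 p.2
  | [] => by simp [pairs, List.Chain']
  | [x] => by simp [pairs, List.Chain']
  | x :: y :: t => by
    rw [show List.Chain' R (x :: y :: t) ↔ R x y ∧ List.Chain' R (y :: t) from List.isChain_cons_cons, chain'_iff_pairs (y :: t), pairs_cons]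
    constructor
    · rintro ⟨h1, h2⟩ p hp
      rcases List.mem_cons.1 hp with h | h
      · subst h; exact h1
      · exact h2 p h
    · intro h
      exact ⟨h (x, y) (List.mem_cons_self), fun p hp => h p (List.mem_cons_of_mem _ hp)⟩

set_option linter.unusedSectionVars false

lemma listLen_eq_pairs (L : V → V → ℝ) (l : List V) :
    listLen L l = ((pairs l).map (fun q => L q.1 q.2)).sum := rfl

lemma listLen_glue (L : V → V → ℝ) {l₁ l₂ : List V} (h1 : l₁ ≠ []) (h2 : l₂ ≠ [])
    (hg : l₁.getLastI = l₂.headI) :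
    listLen L (l₁ ++ l₂.tail) = listLen L l₁ + listLen L l₂ := by
  simp [listLen_eq_pairs, pairs_glue l₁ l₂ h1 h2 hg]

lemma listLen_nonneg {L : V → V → ℝ} {l : List V}
    (h : ∀ p ∈ pairs l, 0 < L p.1 p.2) : 0 ≤ listLen L l := by
  rw [listLen_eq_pairs]
  apply List.sum_nonneg
  intro x hx
  rcases List.mem_map.1 hx with ⟨p, hp, rfl⟩
  exact (h p hp).le

lemma pairs_ne_nil {l : List V} (h : 2 ≤ l.length) : pairs l ≠ [] := by
  match l, h with
  | a :: b :: t, _ => simp [pairs_cons]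

lemma listLen_pos {L : V → V → ℝ} {l : List V} (h2 : 2 ≤ l.length)
    (h : ∀ p ∈ pairs l, 0 < L p.1 p.2) : 0 < listLen L l := by
  rw [listLen_eq_pairs]
  match l, h2 with
  | a :: b :: t, _ =>
    rw [pairs_cons]
    simp only [List.map_cons, List.sum_cons]
    have : 0 ≤ ((pairs (b :: t)).map fun q => L q.1 q.2).sum := by
      apply List.sum_nonneg
      intro x hx
      rcases List.mem_map.1 hx with ⟨p, hp, rfl⟩
      exact (h p (List.mem_cons_of_mem _ hp)).le
    have h0 : 0 < L a b := h (a, b) (List.mem_cons_self)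
    linarith

lemma headI_glue {l₁ l₂ : List V} (h1 : l₁ ≠ []) :
    (l₁ ++ l₂).headI = l₁.headI := by
  cases l₁ with
  | nil => exact absurd rfl h1
  | cons a t => simp

lemma getLastI_glue {l₁ l₂ : List V} (h1 : l₁ ≠ []) (h2 : l₂ ≠ [])
    (hg : l₁.getLastI = l₂.headI) :
    (l₁ ++ l₂.tail).getLastI = l₂.getLastI := by
  cases l₂ with
  | nil => exact absurd rfl h2
  | cons y t =>
    cases t with
    | nil => simp only [List.tail_cons, List.append_nil]; exact hg
    | cons z s =>
      simp only [List.tail_cons]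
      rw [List.getLastI_eq_getLast?, List.getLast?_append]
      rw [List.getLastI_eq_getLast?]
      have h3 : (z :: s).getLast? = some ((z :: s).getLast (by simp)) := List.getLast?_eq_getLast _
      rw [h3]
      simp [Option.or]
      rw [h3]
      rfl

lemma headI_drop {l : List V} {j : ℕ} (h : j < l.length) :
    (l.drop j).headI = l[j] := by
  rw [List.drop_eq_getElem_cons h]; rfl

lemma getLastI_take {l : List V} {j : ℕ} (h : j < l.length) :
    (l.take (j+1)).getLastI = l[j] := by
  rw [List.getLastI_eq_getLast?, List.take_succ, List.getElem?_eq_getElem h,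
    List.getLast?_append]
  simp

lemma take_ne_nil' {l : List V} {j : ℕ} (h : j < l.length) : l.take (j+1) ≠ [] := by
  have : (l.take (j+1)).length = min (j+1) l.length := List.length_take
  intro hc; rw [hc] at this; simp at this; omega

lemma drop_ne_nil' {l : List V} {j : ℕ} (h : j < l.length) : l.drop j ≠ [] := by
  have : (l.drop j).length = l.length - j := List.length_drop
  intro hc; rw [hc] at this; simp at this; omega

lemma take_glue_drop (l : List V) {j : ℕ} (h : j < l.length) :
    l.take (j+1) ++ (l.drop j).tail = l := by
  rw [List.tail_drop]
  exact List.take_append_drop _ _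

lemma pairs_split {l : List V} {j : ℕ} (h : j < l.length) :
    pairs l = pairs (l.take (j+1)) ++ pairs (l.drop j) := by
  conv_lhs => rw [← take_glue_drop l h]
  exact pairs_glue _ _ (take_ne_nil' h) (drop_ne_nil' h)
    (by rw [getLastI_take h, headI_drop h])

lemma listLen_split (L : V → V → ℝ) {l : List V} {j : ℕ} (h : j < l.length) :
    listLen L l = listLen L (l.take (j+1)) + listLen L (l.drop j) := by
  simp [listLen_eq_pairs, pairs_split h]

lemma pairs_drop_subset {l : List V} {j : ℕ} {p : V × V}
    (hp : p ∈ pairs (l.drop j)) : p ∈ pairs l := by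
  by_cases h : j < l.length
  · rw [pairs_split h]; exact List.mem_append_right _ hp
  · rw [List.drop_eq_nil_of_le (by omega)] at hp; simp [pairs] at hp

lemma pairs_take_subset {l : List V} {j : ℕ} {p : V × V}
    (hp : p ∈ pairs (l.take (j+1))) : p ∈ pairs l := by
  by_cases h : j < l.length
  · rw [pairs_split h]; exact List.mem_append_left _ hp
  · rw [List.take_of_length_le (by omega)] at hp; exact hp


lemma edgeIn_iff_pairs {l : List V} {u v : V} :
    edgeIn l u v ↔ ((u, v) ∈ pairs l ∨ (v, u) ∈ pairs l) := Iff.rfl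

lemma adj_of_pairs {G : SimpleGraph V} {l : List V} (hc : l.Chain' G.Adj)
    {p : V × V} (hp : p ∈ pairs l) : G.Adj p.1 p.2 :=
  (chain'_iff_pairs l).1 hc p hp

lemma glue_tail_dropLast {A B : List V} (hA : A ≠ []) (hB : B.tail ≠ []) :
    (A ++ B.tail).tail.dropLast = A.tail ++ B.tail.dropLast := by
  cases A with
  | nil => exact absurd rfl hA
  | cons x t =>
    simp only [List.cons_append, List.tail_cons]
    exact List.dropLast_append_of_ne_nil hB

lemma glue_facts {G : SimpleGraph V} {A B : List V}
    (hA : A ≠ []) (hB : B ≠ []) (hg : A.getLastI = B.headI)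
    (hcA : A.Chain' G.Adj) (hcB : B.Chain' G.Adj)
    (hnA : A.Nodup) (hnB : B.Nodup) (hdis : A.Disjoint B.tail) :
    (A ++ B.tail).Chain' G.Adj ∧ (A ++ B.tail).Nodup ∧
    (A ++ B.tail).headI = A.headI ∧ (A ++ B.tail).getLastI = B.getLastI ∧
    pairs (A ++ B.tail) = pairs A ++ pairs B := by
  have hpg := pairs_glue A B hA hB hg
  refine ⟨?_, ?_, headI_glue hA, getLastI_glue hA hB hg, hpg⟩
  · rw [chain'_iff_pairs, hpg]
    intro p hp
    rcases List.mem_append.1 hp with h | h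
    · exact adj_of_pairs hcA h
    · exact adj_of_pairs hcB h
  · rw [List.nodup_append]
    exact ⟨hnA, hnB.tail, fun a ha b hb hab => hdis ha (hab ▸ hb)⟩

lemma headI_eq_getElem {l : List V} (h : l ≠ []) :
    l.headI = l[0]'(List.length_pos_iff.2 h) := by
  have := headI_drop (l := l) (j := 0) (List.length_pos_iff.2 h)
  simpa using this

lemma getLastI_eq_getElem {l : List V} (h : l ≠ []) :
    l.getLastI = l[l.length - 1]'(by have := List.length_pos_iff.2 h; omega) := by
  have hpos := List.length_pos_iff.2 h
  have hlen : l.length - 1 < l.length := by omega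
  have := getLastI_take (l := l) hlen
  rw [show l.length - 1 + 1 = l.length by omega, List.take_length] at this
  exact this

lemma interior_getElem_mem {l : List V} {m : ℕ} (h1 : 1 ≤ m) (h2 : m + 2 ≤ l.length) :
    l[m]'(by omega) ∈ l.tail.dropLast := by
  have hlen : l.tail.dropLast.length = l.length - 2 := by
    rw [List.length_dropLast, List.length_tail]; omega
  have hm : m - 1 < l.tail.dropLast.length := by omega
  have : l.tail.dropLast[m-1]'hm = l[m]'(by omega) := by
    rw [List.getElem_dropLast, List.getElem_tail]
    congr 1
    omega
  rw [← this]
  exact List.getElem_mem hm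

lemma mem_tail_take {l : List V} {ia : ℕ} {v : V} (h : v ∈ (l.take (ia+1)).tail) :
    ∃ m, 1 ≤ m ∧ m ≤ ia ∧ ∃ hm : m < l.length, l[m] = v := by
  rcases List.mem_iff_getElem.1 h with ⟨i, hi, hv⟩
  have h1 : (l.take (ia+1)).tail.length = min (ia+1) l.length - 1 := by
    simp [List.length_tail]
  rw [h1] at hi
  have h2 : i + 1 < l.length := by omega
  refine ⟨i + 1, by omega, by omega, h2, ?_⟩
  rw [← hv, List.getElem_tail, List.getElem_take]

lemma mem_take' {l : List V} {n : ℕ} {v : V} (h : v ∈ l.take n) :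
    ∃ m, m < n ∧ ∃ hm : m < l.length, l[m] = v := by
  rcases List.mem_iff_getElem.1 h with ⟨i, hi, hv⟩
  have h1 : (l.take n).length = min n l.length := by simp
  rw [h1] at hi
  refine ⟨i, by omega, by omega, ?_⟩
  rw [← hv, List.getElem_take]

lemma mem_drop' {l : List V} {n : ℕ} {v : V} (h : v ∈ l.drop n) :
    ∃ m, n ≤ m ∧ ∃ hm : m < l.length, l[m] = v := by
  rcases List.mem_iff_getElem.1 h with ⟨i, hi, hv⟩
  have h1 : (l.drop n).length = l.length - n := by simp
  rw [h1] at hi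
  refine ⟨n + i, by omega, by omega, ?_⟩
  rw [← hv, List.getElem_drop]

lemma mem_tail_drop {l : List V} {ib : ℕ} {v : V} (h : v ∈ (l.drop ib).tail) :
    ∃ m, ib + 1 ≤ m ∧ ∃ hm : m < l.length, l[m] = v := by
  rw [List.tail_drop] at h
  exact mem_drop' h

lemma getLastI_tail {l : List V} (h : l.tail ≠ []) : l.tail.getLastI = l.getLastI := by
  cases l with
  | nil => simp at h
  | cons x t =>
    simp only [List.tail_cons]
    cases t with
    | nil => simp at h
    | cons y s =>
      rw [List.getLastI_eq_getLast?, List.getLastI_eq_getLast?,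
        List.getLast?_cons_cons]

lemma mem_dropLast_or_getLastI {l : List V} {v : V} (h : l ≠ []) (hv : v ∈ l) :
    v ∈ l.dropLast ∨ v = l.getLastI := by
  have hd := List.dropLast_append_getLast h
  rw [← hd] at hv
  rcases List.mem_append.1 hv with h1 | h1
  · exact Or.inl h1
  · right
    rw [List.getLastI_eq_getLast?, List.getLast?_eq_getLast h]
    simpa using h1

lemma headI_take {l : List V} {n : ℕ} : (l.take (n+1)).headI = l.headI := by
  cases l <;> simp

lemma getLastI_drop {l : List V} {n : ℕ} (h : n < l.length) :
    (l.drop n).getLastI = l.getLastI := by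
  have h1 : l.drop n ≠ [] := drop_ne_nil' h
  have h2 : l ≠ [] := by intro hc; rw [hc] at h; simp at h
  rw [getLastI_eq_getElem h1, getLastI_eq_getElem h2]
  have h3 : (l.drop n).length = l.length - n := by simp
  rw [List.getElem_drop]
  congr 1
  omega

lemma mem_dropLast_tail_drop {l : List V} {ib : ℕ} {v : V}
    (h : v ∈ ((l.drop ib).tail).dropLast) :
    ∃ m, ib + 1 ≤ m ∧ m + 2 ≤ l.length ∧ ∃ hm : m < l.length, l[m] = v := by
  rw [List.tail_drop] at h
  rcases List.mem_iff_getElem.1 h with ⟨t, ht, hv⟩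
  have h1 : (l.drop (ib+1)).dropLast.length = l.length - (ib+1) - 1 := by simp
  rw [h1] at ht
  have h2 : ib + 1 + t < l.length := by omega
  refine ⟨ib + 1 + t, by omega, by omega, h2, ?_⟩
  rw [← hv, List.getElem_dropLast, List.getElem_drop]

lemma nodup_take {l : List V} (h : l.Nodup) (n : ℕ) : (l.take n).Nodup :=
  (List.take_sublist _ _).nodup h

lemma nodup_drop {l : List V} (h : l.Nodup) (n : ℕ) : (l.drop n).Nodup :=
  (List.drop_sublist _ _).nodup h

lemma mem_split_head_tail {l : List V} {x : V} (h : l ≠ []) (hx : x ∈ l) :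
    x = l.headI ∨ x ∈ l.tail := by
  cases l with
  | nil => exact absurd rfl h
  | cons a t => simp at hx ⊢; tauto

lemma tail_glue {l₁ l₂ : List V} (h : l₁ ≠ []) :
    (l₁ ++ l₂).tail = l₁.tail ++ l₂ := by
  cases l₁ with
  | nil => exact absurd rfl h
  | cons a t => simp

lemma slope_step {k : ℕ} (G : SimpleGraph V)
    (L : V → V → ℝ) (hL : ∀ u v, G.Adj u v → 0 < L u v)
    (P : Fin (k + 1) → List V) (pstar : V → ℝ)
    (hpath : ∀ i, IsPathList G (P i))
    (hshortest : ∀ l, IsPathList G l → l.headI = (P 0).headI →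
      l.getLastI = (P 0).getLastI →
      listLen L (P 0) ≤ listLen L l ∧
      (listLen L l = listLen L (P 0) → l = P 0))
    (hf0 : pathSlope L pstar (P 0) = 1)
    (hinterp : ∀ i, ∀ j : ℕ, j < (P i).length →
      pstar (((P i).drop j).headI) =
        pstar ((P i).getLastI) + pathSlope L pstar (P i) * listLen L ((P i).drop j))
    (hadm : ∀ i : Fin (k + 1), 0 < (i : ℕ) → Admissible G pstar P i (P i))
    (hmax : ∀ i : Fin (k + 1), 0 < (i : ℕ) → ∀ l, Admissible G pstar P i l →
      pathSlope L pstar l ≤ pathSlope L pstar (P i))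
    (huniq : ∀ i : Fin (k + 1), 0 < (i : ℕ) → 0 < pathSlope L pstar (P i) →
      ∀ l, Admissible G pstar P i l → pathSlope L pstar l = pathSlope L pstar (P i) →
        l = P i)
    (i i' : Fin (k + 1)) (hii' : (i : ℕ) + 1 = (i' : ℕ))
    (hpos : 0 < pathSlope L pstar (P i')) :
    pathSlope L pstar (P i') < pathSlope L pstar (P i) := by
  by_contra hgecon
  push_neg at hgecon
  -- hgecon : pathSlope L pstar (P i) ≤ pathSlope L pstar (P i')
  obtain ⟨hcC, hnC, hlC⟩ := hpath i
  obtain ⟨hcQ, hnQ, hlQ⟩ := hpath i'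
  set C := P i with hCdef
  set Q := P i' with hQdef
  set fC := pathSlope L pstar C with hfCdef
  set fQ := pathSlope L pstar Q with hfQdef
  have goodC : ∀ p ∈ pairs C, 0 < L p.1 p.2 := fun p hp => hL _ _ (adj_of_pairs hcC hp)
  have goodQ : ∀ p ∈ pairs Q, 0 < L p.1 p.2 := fun p hp => hL _ _ (adj_of_pairs hcQ hp)
  have lenCpos : 0 < listLen L C := listLen_pos hlC goodC
  have lenQpos : 0 < listLen L Q := listLen_pos hlQ goodQ
  have hii : i < i' := by
    rw [Fin.lt_def]; omega
  have hi'pos : 0 < (i' : ℕ) := by omega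
  have hQadm := hadm i' hi'pos
  have hfq : pstar Q.headI - pstar Q.getLastI = fQ * listLen L Q := by
    rw [hfQdef, pathSlope]
    field_simp
  have hab : pstar Q.getLastI < pstar Q.headI := by
    nlinarith [mul_pos hpos lenQpos]
  have hI : ∀ j (hj : j < C.length), pstar (C[j]'hj) =
      pstar C.getLastI + fC * listLen L (C.drop j) := by
    intro j hj
    have := hinterp i j hj
    rwa [headI_drop hj] at this
  have hChead : pstar C.headI = pstar C.getLastI + fC * listLen L C := by
    have h0 : 0 < C.length := by omega
    have := hI 0 h0
    rw [← headI_eq_getElem (by intro hc; rw [hc] at h0; simp at h0)] at this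
    simpa using this
  have hfCnn : 0 ≤ fC := by
    rcases Nat.eq_zero_or_pos (i : ℕ) with h0 | h0
    · have hi0 : i = 0 := by apply Fin.ext; simpa using h0
      rw [hfCdef, hCdef, hi0, hf0]; norm_num
    · have hAd := hadm i h0
      exact div_nonneg (by linarith [hAd.2.2.2.1]) lenCpos.le
  have hmono : ∀ v, onEarlier P i v → onEarlier P i' v := by
    rintro v ⟨j, hj, hm⟩
    exact ⟨j, lt_trans hj hii, hm⟩
  have hDmono : ∀ ja jb, ja ≤ jb → jb < C.length →
      listLen L (C.drop jb) ≤ listLen L (C.drop ja) := by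
    intro ja jb h hjb
    have hlen : jb - ja < (C.drop ja).length := by simp; omega
    have hsplit := listLen_split L (l := C.drop ja) (j := jb - ja) hlen
    have hdd : (C.drop ja).drop (jb - ja) = C.drop jb := by
      rw [List.drop_drop]; congr 1; omega
    rw [hdd] at hsplit
    have hnn : 0 ≤ listLen L ((C.drop ja).take (jb - ja + 1)) :=
      listLen_nonneg (fun p hp => goodC p (pairs_drop_subset (pairs_take_subset hp)))
    linarith
  have classify : ∀ v, onEarlier P i' v → onEarlier P i v ∨ v ∈ C := by
    rintro v ⟨j, hj, hm⟩
    by_cases hji : j < i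
    · exact Or.inl ⟨j, hji, hm⟩
    · have hje : j = i := by
        have h1 := Fin.lt_def.1 hj
        have h2 : ¬ (j:ℕ) < (i:ℕ) := fun hc => hji (Fin.lt_def.2 hc)
        exact Fin.ext (by omega)
      right
      rw [hje] at hm
      exact hm
  have hQedge : ∃ pp : V × V, pp ∈ pairs Q := List.exists_mem_of_ne_nil _ (pairs_ne_nil hlQ)
  have closing : ∀ (P' : List V) (y : ℝ), 0 ≤ y → 0 < (i : ℕ) →
      Admissible G pstar P i P' →
      (∀ pp ∈ pairs Q, pp ∈ pairs P') →
      listLen L P' = listLen L Q + y →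
      pstar P'.headI - pstar P'.getLastI =
        (pstar Q.headI - pstar Q.getLastI) + fC * y →
      False := by
    intro P' y hy h0 hadmP hsub hlen hdelta
    have hne : listLen L Q + y ≠ 0 := ne_of_gt (by linarith)
    have hslopeP : pathSlope L pstar P' = (fQ * listLen L Q + fC * y) / (listLen L Q + y) := by
      rw [pathSlope, hdelta, hfq, hlen]
    have hle := hmax i h0 P' hadmP
    have hgeP : fC ≤ pathSlope L pstar P' := by
      rw [hslopeP, le_div_iff₀ (by linarith)]
      nlinarith [mul_le_mul_of_nonneg_right hgecon lenQpos.le]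
    have heq : pathSlope L pstar P' = fC := le_antisymm hle hgeP
    have heq2 : fQ * listLen L Q + fC * y = fC * (listLen L Q + y) :=
      (div_eq_iff hne).1 (hslopeP ▸ heq)
    have h3 : (fQ - fC) * listLen L Q = 0 := by linear_combination heq2
    have hfQC : fQ = fC := by
      rcases mul_eq_zero.1 h3 with h4 | h4
      · linarith
      · exact absurd h4 (ne_of_gt lenQpos)
    have hfCpos : 0 < fC := hfQC ▸ hpos
    have hun := huniq i h0 hfCpos P' hadmP heq
    obtain ⟨pp, hpp⟩ := hQedge
    have hQe : edgeIn Q pp.1 pp.2 := Or.inl (by simpa using hpp)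
    refine hQadm.2.2.2.2.2 pp.1 pp.2 hQe i hii (Or.inl ?_)
    have : pp ∈ pairs P' := hsub pp hpp
    rw [hun] at this
    simpa using this
  have hCne : C ≠ [] := by intro hc; rw [hc] at hlC; simp at hlC
  have hQne : Q ≠ [] := by intro hc; rw [hc] at hlQ; simp at hlQ
  have hQtne : Q.tail ≠ [] := by
    intro hc
    have h1 : Q.tail.length = Q.length - 1 := List.length_tail
    rw [hc] at h1; simp at h1; omega
  have hintQ : ∀ v ∈ Q.tail.dropLast, ¬ onEarlier P i v := fun v hv hc =>
    hQadm.2.2.2.2.1 v hv (hmono v hc)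
  have hintQC : ∀ v ∈ Q.tail.dropLast, v ∉ C := by
    intro v hv hc
    exact hQadm.2.2.2.2.1 v hv ⟨i, hii, hc⟩
  have hQedgeC : ∀ u v, edgeIn Q u v → ∀ j, j < i → ¬ edgeIn (P j) u v := fun u v he j hj =>
    hQadm.2.2.2.2.2 u v he j (lt_trans hj hii)
  have hCedge : 0 < (i:ℕ) → ∀ u v, edgeIn C u v → ∀ j, j < i → ¬ edgeIn (P j) u v :=
    fun h0 => (hadm i h0).2.2.2.2.2
  have hClen0 : 0 < C.length := by omega
  have hC0 : C.headI = C[0]'hClen0 := headI_eq_getElem hCne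
  have hClast : C.getLastI = C[C.length-1]'(by omega) := getLastI_eq_getElem hCne
  have hCint : 0 < (i:ℕ) → ∀ m (hm : m < C.length), 1 ≤ m → m + 2 ≤ C.length →
      ¬ onEarlier P i (C[m]'hm) := by
    intro h0 m hm h1 h2
    exact (hadm i h0).2.2.2.2.1 _ (interior_getElem_mem h1 h2)
  have hplastC : ∀ m (hm : m < C.length), pstar C.getLastI ≤ pstar (C[m]'hm) := by
    intro m hm
    rw [hI m hm]
    have hnn : 0 ≤ listLen L (C.drop m) :=
      listLen_nonneg (fun p hp => goodC p (pairs_drop_subset hp))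
    nlinarith
  have hinterC : 0 < (i:ℕ) → ∀ m (hm : m < C.length), ¬ onEarlier P i (C[m]'hm) →
      1 ≤ m ∧ m + 2 ≤ C.length := by
    intro h0 m hm hnE
    have hAd := hadm i h0
    constructor
    · rcases Nat.eq_zero_or_pos m with h | h
      · exfalso; apply hnE
        subst h
        rw [← hC0]
        exact hAd.2.1
      · exact h
    · by_cases h : m = C.length - 1
      · exfalso; apply hnE
        have : C[m]'hm = C.getLastI := by rw [hClast]; congr 1
        rw [this]
        exact hAd.2.2.1
      · omega
  -- the four endpoint cases
  by_cases hEa : onEarlier P i Q.headI <;> by_cases hEb : onEarlier P i Q.getLastI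
  · -- CASE 1 : both endpoints on earlier paths
    have h0 : 0 < (i:ℕ) := by
      obtain ⟨j0, hj0, -⟩ := id hEa
      have := Fin.lt_def.1 hj0; omega
    have hadmQ : Admissible G pstar P i Q :=
      ⟨⟨hcQ, hnQ, hlQ⟩, hEa, hEb, le_of_lt hab, hintQ, hQedgeC⟩
    exact closing Q 0 le_rfl h0 hadmQ (fun pp hpp => hpp) (by ring) (by ring)
  · -- CASE 2 : head earlier, tail on C interior
    have h0 : 0 < (i:ℕ) := by
      obtain ⟨j0, hj0, -⟩ := id hEa
      have := Fin.lt_def.1 hj0; omega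
    have hAd := hadm i h0
    have hbC : Q.getLastI ∈ C := by
      rcases classify _ hQadm.2.2.1 with h | h
      · exact absurd h hEb
      · exact h
    obtain ⟨ib, hibm, hibv⟩ := List.mem_iff_getElem.1 hbC
    obtain ⟨hib1, hib2⟩ := hinterC h0 ib hibm (by rw [hibv]; exact hEb)
    have hYne : C.drop ib ≠ [] := drop_ne_nil' hibm
    have hYtne : (C.drop ib).tail ≠ [] := by
      rw [List.tail_drop]
      exact drop_ne_nil' (by omega)
    have hYhead : (C.drop ib).headI = Q.getLastI := by rw [headI_drop hibm, hibv]
    have hYlast : (C.drop ib).getLastI = C.getLastI := getLastI_drop hibm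
    have hcY : (C.drop ib).Chain' G.Adj := by
      rw [chain'_iff_pairs]
      exact fun p hp => adj_of_pairs hcC (pairs_drop_subset hp)
    have hnY : (C.drop ib).Nodup := nodup_drop hnC ib
    have hdisQY : Q.Disjoint (C.drop ib).tail := by
      intro x hxQ hxY
      obtain ⟨m, hm1, hm, hmv⟩ := mem_tail_drop hxY
      have hxC : x ∈ C := by rw [← hmv]; exact List.getElem_mem hm
      rcases mem_split_head_tail hQne hxQ with hx | hx
      · -- x = Q.headI, earlier, and x = C[m] with m ≥ ib+1 ≥ 2
        by_cases hlast : m = C.length - 1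
        · -- then pstar x = pstar C.getLastI ≤ pstar b < pstar a = pstar x
          have hxlast : x = C.getLastI := by rw [hClast, ← hmv]; congr 1
          have h5 := hplastC ib hibm
          rw [hibv] at h5
          rw [hx] at hxlast
          rw [hxlast] at hab
          linarith
        · have h6 := hCint h0 m hm (by omega) (by omega)
          rw [hmv, hx] at h6
          exact h6 hEa
      · rcases mem_dropLast_or_getLastI hQtne hx with hx' | hx'
        · exact hintQC x hx' hxC
        · rw [getLastI_tail hQtne] at hx'
          have h7 : C[m]'hm = C[ib]'hibm := by rw [hmv, hibv, ← hx']
          have := (List.Nodup.getElem_inj_iff hnC).1 h7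
          omega
    obtain ⟨hcP', hnP', hheadP', hlastP', hpairsP'⟩ :=
      glue_facts (G := G) hQne hYne hYhead.symm hcQ hcY hnQ hnY hdisQY
    have hpathP' : IsPathList G (Q ++ (C.drop ib).tail) :=
      ⟨hcP', hnP', by rw [List.length_append]; omega⟩
    have hpbval := hI ib hibm
    rw [hibv] at hpbval
    have hDnn : 0 ≤ listLen L (C.drop ib) :=
      listLen_nonneg (fun p hp => goodC p (pairs_drop_subset hp))
    have hadmP' : Admissible G pstar P i (Q ++ (C.drop ib).tail) := by
      refine ⟨hpathP', ?_, ?_, ?_, ?_, ?_⟩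
      · rw [hheadP']; exact hEa
      · rw [hlastP', hYlast]; exact hAd.2.2.1
      · rw [hheadP', hlastP', hYlast]
        have h5 := hplastC ib hibm
        rw [hibv] at h5
        linarith
      · intro v hv
        rw [glue_tail_dropLast hQne hYtne] at hv
        rcases List.mem_append.1 hv with h | h
        · rcases mem_dropLast_or_getLastI hQtne h with h' | h'
          · exact hintQ v h'
          · rw [getLastI_tail hQtne] at h'
            rw [h']; exact hEb
        · obtain ⟨m, hm1, hm2, hm, hmv⟩ := mem_dropLast_tail_drop h
          have := hCint h0 m hm (by omega) hm2
          rwa [hmv] at this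
      · intro u v huv j hj
        have hpairs2 : ∀ pp : V × V, pp ∈ pairs (Q ++ (C.drop ib).tail) →
            pp ∈ pairs Q ∨ pp ∈ pairs (C.drop ib) := fun pp hpp =>
          List.mem_append.1 (by rw [← hpairsP']; exact hpp)
        rcases huv with h | h
        · rcases hpairs2 _ h with h' | h'
          · exact hQedgeC u v (Or.inl h') j hj
          · exact hCedge h0 u v (Or.inl (pairs_drop_subset h')) j hj
        · rcases hpairs2 _ h with h' | h'
          · exact hQedgeC u v (Or.inr h') j hj
          · exact hCedge h0 u v (Or.inr (pairs_drop_subset h')) j hj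
    refine closing (Q ++ (C.drop ib).tail) (listLen L (C.drop ib)) hDnn h0 hadmP'
      (fun pp hpp => by rw [hpairsP']; exact List.mem_append_left _ hpp)
      (listLen_glue L hQne hYne hYhead.symm) ?_
    rw [hheadP', hlastP', hYlast]
    linarith
  · -- CASE 3 : head on C interior, tail earlier
    have h0 : 0 < (i:ℕ) := by
      obtain ⟨j0, hj0, -⟩ := id hEb
      have := Fin.lt_def.1 hj0; omega
    have hAd := hadm i h0
    have haC : Q.headI ∈ C := by
      rcases classify _ hQadm.2.1 with h | h
      · exact absurd h hEa
      · exact h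
    obtain ⟨ia, hiam, hiav⟩ := List.mem_iff_getElem.1 haC
    obtain ⟨hia1, hia2⟩ := hinterC h0 ia hiam (by rw [hiav]; exact hEa)
    have hXne : C.take (ia+1) ≠ [] := take_ne_nil' hiam
    have hXlen : (C.take (ia+1)).length = ia + 1 := by rw [List.length_take]; omega
    have hXlast : (C.take (ia+1)).getLastI = Q.headI := by rw [getLastI_take hiam, hiav]
    have hXhead : (C.take (ia+1)).headI = C.headI := headI_take
    have hcX : (C.take (ia+1)).Chain' G.Adj := by
      rw [chain'_iff_pairs]
      exact fun p hp => adj_of_pairs hcC (pairs_take_subset hp)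
    have hnX : (C.take (ia+1)).Nodup := nodup_take hnC _
    have hpaval := hI ia hiam
    rw [hiav] at hpaval
    have hsplitA := listLen_split L hiam
    have hXnn : 0 ≤ listLen L (C.take (ia+1)) :=
      listLen_nonneg (fun p hp => goodC p (pairs_take_subset hp))
    have hDd : listLen L (C.drop ia) ≤ listLen L C := by
      have := hDmono 0 ia (by omega) hiam
      simpa using this
    have hphead_ge : pstar Q.headI ≤ pstar C.headI := by
      have := mul_le_mul_of_nonneg_left hDd hfCnn
      linarith [hChead, hpaval]
    have hdisXQ : (C.take (ia+1)).Disjoint Q.tail := by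
      intro x hxX hxQt
      obtain ⟨m, hmlt, hm, hmv⟩ := mem_take' hxX
      rcases mem_dropLast_or_getLastI hQtne hxQt with hx' | hx'
      · exact hintQC x hx' (by rw [← hmv]; exact List.getElem_mem hm)
      · rw [getLastI_tail hQtne] at hx'
        by_cases hm0 : m = 0
        · have hxhead : x = C.headI := by rw [hC0, ← hmv]; congr 1
          have hpp : pstar Q.getLastI = pstar C.headI := by rw [← hx', hxhead]
          linarith
        · have h6 := hCint h0 m hm (by omega) (by omega)
          rw [hmv, hx'] at h6
          exact h6 hEb
    obtain ⟨hcP', hnP', hheadP', hlastP', hpairsP'⟩ :=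
      glue_facts (G := G) hXne hQne hXlast hcX hcQ hnX hnQ hdisXQ
    have hpathP' : IsPathList G (C.take (ia+1) ++ Q.tail) :=
      ⟨hcP', hnP', by rw [List.length_append, List.length_tail, hXlen]; omega⟩
    have hadmP' : Admissible G pstar P i (C.take (ia+1) ++ Q.tail) := by
      refine ⟨hpathP', ?_, ?_, ?_, ?_, ?_⟩
      · rw [hheadP', hXhead]; exact hAd.2.1
      · rw [hlastP']; exact hEb
      · rw [hheadP', hlastP', hXhead]
        linarith
      · intro v hv
        rw [glue_tail_dropLast hXne hQtne] at hv
        rcases List.mem_append.1 hv with h | h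
        · obtain ⟨m, hm1, hmle, hm, hmv⟩ := mem_tail_take h
          have := hCint h0 m hm (by omega) (by omega)
          rwa [hmv] at this
        · exact hintQ v h
      · intro u v huv j hj
        have hpairs2 : ∀ pp : V × V, pp ∈ pairs (C.take (ia+1) ++ Q.tail) →
            pp ∈ pairs (C.take (ia+1)) ∨ pp ∈ pairs Q := fun pp hpp =>
          List.mem_append.1 (by rw [← hpairsP']; exact hpp)
        rcases huv with h | h
        · rcases hpairs2 _ h with h' | h'
          · exact hCedge h0 u v (Or.inl (pairs_take_subset h')) j hj
          · exact hQedgeC u v (Or.inl h') j hj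
        · rcases hpairs2 _ h with h' | h'
          · exact hCedge h0 u v (Or.inr (pairs_take_subset h')) j hj
          · exact hQedgeC u v (Or.inr h') j hj
    have e1 : fC * listLen L (C.take (ia+1)) =
        fC * listLen L C - fC * listLen L (C.drop ia) := by
      rw [hsplitA]; ring
    refine closing (C.take (ia+1) ++ Q.tail) (listLen L (C.take (ia+1))) hXnn h0 hadmP'
      (fun pp hpp => by rw [hpairsP']; exact List.mem_append_right _ hpp)
      ?_ ?_
    · rw [listLen_glue L hXne hQne hXlast]; ring
    · rw [hheadP', hlastP', hXhead]
      linarith [hChead, hpaval, e1]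
  · -- CASE 4 : both endpoints on C
    have haC : Q.headI ∈ C := by
      rcases classify _ hQadm.2.1 with h | h
      · exact absurd h hEa
      · exact h
    have hbC : Q.getLastI ∈ C := by
      rcases classify _ hQadm.2.2.1 with h | h
      · exact absurd h hEb
      · exact h
    obtain ⟨ia, hiam, hiav⟩ := List.mem_iff_getElem.1 haC
    obtain ⟨ib, hibm, hibv⟩ := List.mem_iff_getElem.1 hbC
    have hpaval := hI ia hiam
    rw [hiav] at hpaval
    have hpbval := hI ib hibm
    rw [hibv] at hpbval
    have hiaib : ia < ib := by
      by_contra hcon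
      push_neg at hcon
      have hDle := hDmono ib ia hcon hiam
      have := mul_le_mul_of_nonneg_left hDle hfCnn
      linarith
    have hXne : C.take (ia+1) ≠ [] := take_ne_nil' hiam
    have hXlen : (C.take (ia+1)).length = ia + 1 := by rw [List.length_take]; omega
    have hXlast : (C.take (ia+1)).getLastI = Q.headI := by rw [getLastI_take hiam, hiav]
    have hXhead : (C.take (ia+1)).headI = C.headI := headI_take
    have hcX : (C.take (ia+1)).Chain' G.Adj := by
      rw [chain'_iff_pairs]
      exact fun p hp => adj_of_pairs hcC (pairs_take_subset hp)
    have hnX : (C.take (ia+1)).Nodup := nodup_take hnC _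
    have hYne : C.drop ib ≠ [] := drop_ne_nil' hibm
    have hYhead : (C.drop ib).headI = Q.getLastI := by rw [headI_drop hibm, hibv]
    have hYlast : (C.drop ib).getLastI = C.getLastI := getLastI_drop hibm
    have hcY : (C.drop ib).Chain' G.Adj := by
      rw [chain'_iff_pairs]
      exact fun p hp => adj_of_pairs hcC (pairs_drop_subset hp)
    have hnY : (C.drop ib).Nodup := nodup_drop hnC ib
    have hXnn : 0 ≤ listLen L (C.take (ia+1)) :=
      listLen_nonneg (fun p hp => goodC p (pairs_take_subset hp))
    have hDnn : 0 ≤ listLen L (C.drop ib) :=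
      listLen_nonneg (fun p hp => goodC p (pairs_drop_subset hp))
    have hsplitA := listLen_split L hiam
    have hdis1 : (C.take (ia+1)).Disjoint Q.tail := by
      intro x hxX hxQt
      obtain ⟨m, hmlt, hm, hmv⟩ := mem_take' hxX
      rcases mem_dropLast_or_getLastI hQtne hxQt with hx' | hx'
      · exact hintQC x hx' (by rw [← hmv]; exact List.getElem_mem hm)
      · rw [getLastI_tail hQtne] at hx'
        have h7 : C[m]'hm = C[ib]'hibm := by rw [hmv, hibv, ← hx']
        have := (List.Nodup.getElem_inj_iff hnC).1 h7
        omega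
    obtain ⟨hcM, hnM, hheadM, hlastM, hpairsM⟩ :=
      glue_facts (G := G) hXne hQne hXlast hcX hcQ hnX hnQ hdis1
    have hMne : C.take (ia+1) ++ Q.tail ≠ [] :=
      fun hc => hXne (List.append_eq_nil_iff.1 hc).1
    have hMlast : (C.take (ia+1) ++ Q.tail).getLastI = (C.drop ib).headI := by
      rw [hlastM, hYhead]
    have hdis2 : (C.take (ia+1) ++ Q.tail).Disjoint (C.drop ib).tail := by
      intro x hxM hxY
      obtain ⟨m', hm'1, hm', hm'v⟩ := mem_tail_drop hxY
      rcases List.mem_append.1 hxM with hx | hx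
      · obtain ⟨m, hmlt, hm, hmv⟩ := mem_take' hx
        have h7 : C[m]'hm = C[m']'hm' := by rw [hmv, hm'v]
        have := (List.Nodup.getElem_inj_iff hnC).1 h7
        omega
      · rcases mem_dropLast_or_getLastI hQtne hx with hx' | hx'
        · exact hintQC x hx' (by rw [← hm'v]; exact List.getElem_mem hm')
        · rw [getLastI_tail hQtne] at hx'
          have h7 : C[ib]'hibm = C[m']'hm' := by rw [hibv, hm'v, ← hx']
          have := (List.Nodup.getElem_inj_iff hnC).1 h7
          omega
    obtain ⟨hcP', hnP', hheadP', hlastP', hpairsP'⟩ :=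
      glue_facts (G := G) hMne hYne hMlast hcM hcY hnM hnY hdis2
    have hheads : ((C.take (ia+1) ++ Q.tail) ++ (C.drop ib).tail).headI = C.headI := by
      rw [hheadP', hheadM, hXhead]
    have hlasts : ((C.take (ia+1) ++ Q.tail) ++ (C.drop ib).tail).getLastI = C.getLastI := by
      rw [hlastP', hYlast]
    have hpathP' : IsPathList G ((C.take (ia+1) ++ Q.tail) ++ (C.drop ib).tail) := by
      refine ⟨hcP', hnP', ?_⟩
      rw [List.length_append, List.length_append, List.length_tail, hXlen]
      omega
    have hlenP' : listLen L ((C.take (ia+1) ++ Q.tail) ++ (C.drop ib).tail) =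
        listLen L Q + (listLen L (C.take (ia+1)) + listLen L (C.drop ib)) := by
      rw [listLen_glue L hMne hYne hMlast, listLen_glue L hXne hQne hXlast]
      ring
    have e2 : fC * (listLen L (C.take (ia+1)) + listLen L (C.drop ib)) =
        (fC * listLen L C - fC * listLen L (C.drop ia)) + fC * listLen L (C.drop ib) := by
      rw [hsplitA]; ring
    have hdelta : pstar ((C.take (ia+1) ++ Q.tail) ++ (C.drop ib).tail).headI -
        pstar ((C.take (ia+1) ++ Q.tail) ++ (C.drop ib).tail).getLastI =
        (pstar Q.headI - pstar Q.getLastI) +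
          fC * (listLen L (C.take (ia+1)) + listLen L (C.drop ib)) := by
      rw [hheads, hlasts]
      linarith [hChead, hpaval, hpbval, e2]
    have hynn : 0 ≤ listLen L (C.take (ia+1)) + listLen L (C.drop ib) := by linarith
    have hsubQ : ∀ pp ∈ pairs Q, pp ∈ pairs ((C.take (ia+1) ++ Q.tail) ++ (C.drop ib).tail) :=
      fun pp hpp => by
        rw [hpairsP', hpairsM]
        exact List.mem_append_left _ (List.mem_append_right _ hpp)
    rcases Nat.eq_zero_or_pos (i:ℕ) with h0 | h0
    · -- i = 0 : use shortest-path property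
      have hi0 : i = (0 : Fin (k+1)) := Fin.ext (by simpa using h0)
      have hC0P : C = P 0 := by rw [hCdef, hi0]
      have hfC1 : fC = 1 := by rw [hfCdef, hCdef, hi0, hf0]
      obtain ⟨hlenge, hlene⟩ := hshortest ((C.take (ia+1) ++ Q.tail) ++ (C.drop ib).tail)
        hpathP' (by rw [hheads, hC0P]) (by rw [hlasts, hC0P])
      rw [← hC0P, hlenP'] at hlenge
      rw [hfC1] at hdelta hChead
      have hnum : listLen L C = fQ * listLen L Q +
          (listLen L (C.take (ia+1)) + listLen L (C.drop ib)) := by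
        rw [hheads, hlasts] at hdelta
        linarith [hfq, hdelta, hChead]
      rw [hfC1] at hgecon
      have hfQle : fQ * listLen L Q ≤ listLen L Q := by linarith [hnum, hlenge]
      have hfQ1 : fQ = 1 := by
        have h2 : fQ ≤ 1 := by
          by_contra hgt
          push_neg at hgt
          have := (mul_lt_mul_of_pos_right hgt lenQpos)
          simp only [one_mul] at this
          linarith
        linarith
      rw [hfQ1, one_mul] at hnum
      have heqlen : listLen L ((C.take (ia+1) ++ Q.tail) ++ (C.drop ib).tail) =
          listLen L (P 0) := by
        rw [hlenP', ← hC0P]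
        linarith [hnum]
      have hPC := hlene heqlen
      obtain ⟨pp, hpp⟩ := hQedge
      have hQe : edgeIn Q pp.1 pp.2 := Or.inl (by simpa using hpp)
      refine hQadm.2.2.2.2.2 pp.1 pp.2 hQe i hii (Or.inl ?_)
      have hmem := hsubQ pp hpp
      rw [hPC] at hmem
      have hmem2 : pp ∈ pairs (P i) := by rw [hi0]; exact hmem
      simpa using hmem2
    · -- i ≥ 1 : closing
      have hAd := hadm i h0
      obtain ⟨hia1, hia2⟩ := hinterC h0 ia hiam (by rw [hiav]; exact hEa)
      obtain ⟨hib1, hib2⟩ := hinterC h0 ib hibm (by rw [hibv]; exact hEb)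
      have hYtne : (C.drop ib).tail ≠ [] := by
        rw [List.tail_drop]; exact drop_ne_nil' (by omega)
      have hadmP' : Admissible G pstar P i ((C.take (ia+1) ++ Q.tail) ++ (C.drop ib).tail) := by
        refine ⟨hpathP', ?_, ?_, ?_, ?_, ?_⟩
        · rw [hheads]; exact hAd.2.1
        · rw [hlasts]; exact hAd.2.2.1
        · rw [hheads, hlasts]
          have h8 : 0 < fQ * listLen L Q := mul_pos hpos lenQpos
          have h9 : 0 ≤ fC * (listLen L (C.take (ia+1)) + listLen L (C.drop ib)) :=
            mul_nonneg hfCnn hynn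
          rw [hheads, hlasts] at hdelta
          linarith [hfq]
        · intro v hv
          rw [glue_tail_dropLast hMne hYtne, tail_glue hXne] at hv
          rcases List.mem_append.1 hv with h | h
          · rcases List.mem_append.1 h with h1 | h1
            · obtain ⟨m, hm1, hmle, hm, hmv⟩ := mem_tail_take h1
              have := hCint h0 m hm (by omega) (by omega)
              rwa [hmv] at this
            · rcases mem_dropLast_or_getLastI hQtne h1 with h' | h'
              · exact hintQ v h'
              · rw [getLastI_tail hQtne] at h'
                rw [h']; exact hEb
          · obtain ⟨m, hm1, hm2, hm, hmv⟩ := mem_dropLast_tail_drop h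
            have := hCint h0 m hm (by omega) hm2
            rwa [hmv] at this
        · intro u v huv j hj
          have hpairs2 : ∀ pp : V × V,
              pp ∈ pairs ((C.take (ia+1) ++ Q.tail) ++ (C.drop ib).tail) →
              (pp ∈ pairs (C.take (ia+1)) ∨ pp ∈ pairs Q) ∨ pp ∈ pairs (C.drop ib) := by
            intro pp hpp
            have h1 : pp ∈ pairs (C.take (ia+1) ++ Q.tail) ++ pairs (C.drop ib) := by
              rw [← hpairsP']; exact hpp
            rcases List.mem_append.1 h1 with h | h
            · exact Or.inl (List.mem_append.1 (by rw [← hpairsM]; exact h))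
            · exact Or.inr h
          rcases huv with h | h
          · rcases hpairs2 _ h with (h'|h') | h'
            · exact hCedge h0 u v (Or.inl (pairs_take_subset h')) j hj
            · exact hQedgeC u v (Or.inl h') j hj
            · exact hCedge h0 u v (Or.inl (pairs_drop_subset h')) j hj
          · rcases hpairs2 _ h with (h'|h') | h'
            · exact hCedge h0 u v (Or.inr (pairs_take_subset h')) j hj
            · exact hQedgeC u v (Or.inr h') j hj
            · exact hCedge h0 u v (Or.inr (pairs_drop_subset h')) j hj
      exact closing ((C.take (ia+1) ++ Q.tail) ++ (C.drop ib).tail)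
        (listLen L (C.take (ia+1)) + listLen L (C.drop ib)) hynn h0 hadmP' hsubQ hlenP' hdelta


/-- Path decomposition lemma: for the greedy path decomposition `P₀, …, P_k`
(with `P₀` the unique shortest `s₀`-`s₁` path, pathSlope `f(P₀) = 1`, `p*` linear
along each `Pᵢ`, each `Pᵢ` a maximizer — unique when its pathSlope is positive —
of the pathSlope among admissible attachment paths), there is `i₀ ≤ k` with
`f(P₀) > f(P₁) > … > f(P_{i₀}) > 0 = f(P_{i₀+1}) = … = f(P_k)`. -/
theorem path_decomposition_slopes (G : SimpleGraph V)
    (L : V → V → ℝ) (hL : ∀ u v, G.Adj u v → 0 < L u v)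
    (hLsymm : ∀ u v, L u v = L v u)
    (s₀ s₁ : V) (hne : s₀ ≠ s₁)
    (k : ℕ) (P : Fin (k + 1) → List V) (pstar : V → ℝ)
    (hpath : ∀ i, IsPathList G (P i))
    (hP0 : (P 0).headI = s₀ ∧ (P 0).getLastI = s₁)
    (hshortest : ∀ l, IsPathList G l → l.headI = s₀ → l.getLastI = s₁ →
      listLen L (P 0) ≤ listLen L l ∧
      (listLen L l = listLen L (P 0) → l = P 0))
    (hf0 : pathSlope L pstar (P 0) = 1)
    (hinterp : ∀ i, ∀ j : ℕ, j < (P i).length →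
      pstar (((P i).drop j).headI) =
        pstar ((P i).getLastI) + pathSlope L pstar (P i) * listLen L ((P i).drop j))
    (hadm : ∀ i : Fin (k + 1), 0 < (i : ℕ) → Admissible G pstar P i (P i))
    (hmax : ∀ i : Fin (k + 1), 0 < (i : ℕ) → ∀ l, Admissible G pstar P i l →
      pathSlope L pstar l ≤ pathSlope L pstar (P i))
    (huniq : ∀ i : Fin (k + 1), 0 < (i : ℕ) → 0 < pathSlope L pstar (P i) →
      ∀ l, Admissible G pstar P i l → pathSlope L pstar l = pathSlope L pstar (P i) →
        l = P i)
    (hcover : ∀ u v, G.Adj u v → ∃ i, edgeIn (P i) u v) :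
    ∃ i₀ : Fin (k + 1),
      (∀ i, i ≤ i₀ → 0 < pathSlope L pstar (P i)) ∧
      (∀ i, i₀ < i → pathSlope L pstar (P i) = 0) ∧
      (∀ i j, i < j → j ≤ i₀ → pathSlope L pstar (P j) < pathSlope L pstar (P i)) := by
  classical
  have hshort' : ∀ l, IsPathList G l → l.headI = (P 0).headI →
      l.getLastI = (P 0).getLastI →
      listLen L (P 0) ≤ listLen L l ∧
      (listLen L l = listLen L (P 0) → l = P 0) := by
    intro l hl h1 h2
    exact hshortest l hl (by rw [h1, hP0.1]) (by rw [h2, hP0.2])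
  have hnonneg : ∀ n, 0 ≤ pathSlope L pstar (P n) := by
    intro n
    rcases Nat.eq_zero_or_pos (n : ℕ) with h | h
    · have hn0 : n = 0 := Fin.ext (by simpa using h)
      rw [hn0, hf0]; norm_num
    · have hAd := hadm n h
      have hlp : 0 < listLen L (P n) :=
        listLen_pos (hpath n).2.2 (fun p hp => hL _ _ (adj_of_pairs (hpath n).1 hp))
      exact div_nonneg (by linarith [hAd.2.2.2.1]) hlp.le
  have step_lt : ∀ (i i' : Fin (k + 1)), (i : ℕ) + 1 = (i' : ℕ) →
      0 < pathSlope L pstar (P i') →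
      pathSlope L pstar (P i') < pathSlope L pstar (P i) :=
    fun i i' h hp =>
      slope_step G L hL P pstar hpath hshort' hf0 hinterp hadm hmax huniq i i' h hp
  have step_le : ∀ (i i' : Fin (k + 1)), (i : ℕ) + 1 = (i' : ℕ) →
      pathSlope L pstar (P i') ≤ pathSlope L pstar (P i) := by
    intro i i' h
    by_cases hp : 0 < pathSlope L pstar (P i')
    · exact (step_lt i i' h hp).le
    · have h1 := not_lt.1 hp
      linarith [hnonneg i]
  have anti : ∀ (a b : Fin (k + 1)), a ≤ b →
      pathSlope L pstar (P b) ≤ pathSlope L pstar (P a) := by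
    intro a b hab
    have key : ∀ n : ℕ, ∀ hb : n < k + 1, (a : ℕ) ≤ n →
        pathSlope L pstar (P ⟨n, hb⟩) ≤ pathSlope L pstar (P a) := by
      intro n
      induction n with
      | zero =>
        intro hb ha
        have : a = ⟨0, hb⟩ := Fin.ext (by simp only [Fin.val_mk]; omega)
        rw [← this]
      | succ m IH =>
        intro hb ha
        by_cases hcase : (a : ℕ) = m + 1
        · have : a = ⟨m + 1, hb⟩ := Fin.ext (by simp only [Fin.val_mk]; omega)
          rw [← this]
        · have hm : m < k + 1 := by omega
          have h1 := IH hm (by omega)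
          have h2 := step_le ⟨m, hm⟩ ⟨m + 1, hb⟩ rfl
          linarith
    have := key (b : ℕ) b.isLt hab
    simpa using this
  -- maximal positive index
  let S : Finset (Fin (k + 1)) := Finset.univ.filter (fun n => 0 < pathSlope L pstar (P n))
  have hS0 : (0 : Fin (k + 1)) ∈ S := by
    simp only [S, Finset.mem_filter, Finset.mem_univ, true_and]
    rw [hf0]; norm_num
  have hSne : S.Nonempty := ⟨0, hS0⟩
  refine ⟨S.max' hSne, ?_, ?_, ?_⟩
  · intro i hi
    have hmax' : 0 < pathSlope L pstar (P (S.max' hSne)) := by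
      have := S.max'_mem hSne
      simpa [S, Finset.mem_filter] using this
    have := anti i (S.max' hSne) hi
    linarith
  · intro i hi
    have hni : i ∉ S := fun hmem => absurd (S.le_max' i hmem) (not_le.2 hi)
    have : ¬ 0 < pathSlope L pstar (P i) := by
      intro hp
      exact hni (by simp [S, Finset.mem_filter, hp])
    linarith [hnonneg i, not_lt.1 this]
  · intro i j hij hj
    have hmax' : 0 < pathSlope L pstar (P (S.max' hSne)) := by
      have := S.max'_mem hSne
      simpa [S, Finset.mem_filter] using this
    have hjpos : 0 < pathSlope L pstar (P j) := by
      have := anti j (S.max' hSne) hj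
      linarith
    have hilt : (i : ℕ) + 1 < k + 1 := by
      have h1 := Fin.lt_def.1 hij
      have h2 := j.isLt
      omega
    have hstep : pathSlope L pstar (P ⟨(i : ℕ) + 1, hilt⟩) < pathSlope L pstar (P i) := by
      apply step_lt i ⟨(i : ℕ) + 1, hilt⟩ rfl
      have := anti ⟨(i : ℕ) + 1, hilt⟩ j (by rw [Fin.le_def]; exact Fin.lt_def.1 hij)
      linarith
    have := anti ⟨(i : ℕ) + 1, hilt⟩ j (by rw [Fin.le_def]; exact Fin.lt_def.1 hij)
    linarith
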